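/- With parameters ε = δ₀/8, θ = 3ε, β = 7ε, let h be continuous on X = GL_d(R) × P(R^d) with |h|_θ < ∞ and k'_{ε,β}(h) < ∞. Then for every t ∈ R, k'_{ε,β}(e^{itρ}h) ≤ 2|t|^ε |h|_θ + k'_{ε,β}(h), where ρ(g,ū) = log‖gu‖. -/

import Mathlib

open scoped LinearAlgebra.Projectivization RealInnerProductSpace ENNReal
open MeasureTheory

noncomputable section

abbrev E (d : ℕ) := EuclideanSpace ℝ (Fin d)
abbrev Gd (d : ℕ) := (E d →L[ℝ] E d)ˣ

/-- `N(g) = max(‖g‖, ‖g⁻¹‖)`. -/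
def Nnorm {d : ℕ} (g : Gd d) : ℝ :=
  max ‖(g : E d →L[ℝ] E d)‖ ‖((g⁻¹ : Gd d) : E d →L[ℝ] E d)‖

instance (d : ℕ) : TopologicalSpace (ℙ ℝ (E d)) := instTopologicalSpaceQuotient

/-- Angular distance between the directions of nonzero vectors `x, y`:
`d(x̄, ȳ) = ‖x ∧ y‖/(‖x‖‖y‖) = √(‖x‖²‖y‖² − ⟨x,y⟩²)/(‖x‖‖y‖)`. -/
def angDist {d : ℕ} (x y : E d) : ℝ :=
  Real.sqrt (‖x‖ ^ 2 * ‖y‖ ^ 2 - ⟪x, y⟫ ^ 2) / (‖x‖ * ‖y‖)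

/-- Angular distance on projective space, via representatives (it is
scale-invariant). -/
def dP {d : ℕ} (x y : ℙ ℝ (E d)) : ℝ := angDist x.rep y.rep

/-- The norm cocycle `ρ(g, v̄) = log (‖gv‖/‖v‖)`. -/
def ρ {d : ℕ} (g : Gd d) (x : ℙ ℝ (E d)) : ℝ :=
  Real.log (‖(g : E d →L[ℝ] E d) x.rep‖ / ‖x.rep‖)

/-- The weighted sup-seminorm `|h|_θ = sup_{(g,ū)} |h(g,ū)| / N(g)^θ`
(with values in `[0,∞]`). -/
def nθ {d : ℕ} (θ : ℝ) (h : Gd d → ℙ ℝ (E d) → ℂ) : ℝ≥0∞ :=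
  ⨆ (g : Gd d) (x : ℙ ℝ (E d)),
    ENNReal.ofReal (‖h g x‖ / Nnorm g ^ θ)

/-- The weighted Hölder seminorm in the projective variable:
`k_{ε,α}(h) = sup_{g, ū ≠ v̄} |h(g,ū)−h(g,v̄)| / (d(ū,v̄)^ε N(g)^α)`. -/
def kP {d : ℕ} (ε α : ℝ) (h : Gd d → ℙ ℝ (E d) → ℂ) : ℝ≥0∞ :=
  ⨆ (g : Gd d) (x : ℙ ℝ (E d)) (y : ℙ ℝ (E d)) (_ : x ≠ y),
    ENNReal.ofReal (‖h g x - h g y‖ / (dP x y ^ ε * Nnorm g ^ α))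

/-- The weighted Hölder seminorm in the matrix variable:
`k'_{ε,β}(h) = sup_{g ≠ g', ū} |h(g,ū)−h(g',ū)| / (‖g−g'‖^ε N(g)^β N(g')^β)`. -/
def kG {d : ℕ} (ε β : ℝ) (h : Gd d → ℙ ℝ (E d) → ℂ) : ℝ≥0∞ :=
  ⨆ (g : Gd d) (g' : Gd d) (_ : g ≠ g') (x : ℙ ℝ (E d)),
    ENNReal.ofReal (‖h g x - h g' x‖ /
      (‖(g : E d →L[ℝ] E d) - (g' : E d →L[ℝ] E d)‖ ^ ε * Nnorm g ^ β * Nnorm g' ^ β))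

/-- The Banach norm `‖h‖_B = |h|_θ + k_{ε,α}(h) + k'_{ε,β}(h)` (in `[0,∞]`). -/
def normB {d : ℕ} (θ ε α β : ℝ) (h : Gd d → ℙ ℝ (E d) → ℂ) : ℝ≥0∞ :=
  nθ θ h + kP ε α h + kG ε β h
section AuxLemmas

open Complex Real in
private lemma abs_exp_I_mul_sub' (a b : ℝ) :
    ‖Complex.exp (Complex.I * a) - Complex.exp (Complex.I * b)‖ ≤ min |a - b| 2 := by
  have h1 : Complex.exp (Complex.I * a) - Complex.exp (Complex.I * b)
      = Complex.exp (Complex.I * b) * (Complex.exp (((a - b : ℝ) : ℂ) * Complex.I) - 1) := by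
    push_cast
    rw [mul_sub, mul_one, ← Complex.exp_add]
    congr 2
    ring
  rw [h1, norm_mul]
  have h2 : ‖Complex.exp (Complex.I * b)‖ = 1 := by
    rw [mul_comm]; exact Complex.norm_exp_ofReal_mul_I b
  rw [h2, one_mul]
  set c := a - b with hc
  have h3 : Complex.exp ((c : ℂ) * Complex.I) - 1
      = ((Real.cos c - 1 : ℝ) : ℂ) + ((Real.sin c : ℝ) : ℂ) * Complex.I := by
    rw [Complex.exp_mul_I, ← Complex.ofReal_cos, ← Complex.ofReal_sin]
    push_cast; ring
  rw [h3, Complex.norm_add_mul_I]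
  have h4 : (Real.cos c - 1) ^ 2 + Real.sin c ^ 2 = (2 * |Real.sin (c/2)|) ^ 2 := by
    have hcs := Real.cos_sq (c/2)
    rw [show 2*(c/2) = c from by ring] at hcs
    have h5 := Real.sin_sq_add_cos_sq (c/2)
    have h6 := Real.sin_sq_add_cos_sq c
    rw [mul_pow, _root_.sq_abs]
    nlinarith
  rw [h4, Real.sqrt_sq (by positivity)]
  refine le_min ?_ ?_
  · calc 2 * |Real.sin (c/2)| ≤ 2 * |c/2| := by
          have := Real.abs_sin_le_abs (x := c/2); linarith
      _ = |c| := by rw [abs_div]; simp; ring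
  · have := Real.abs_sin_le_one (c/2)
    linarith

private lemma min_le_two_rpow {s ε : ℝ} (hs : 0 ≤ s) (hε : 0 < ε) (hε1 : ε ≤ 1) :
    min s 2 ≤ 2 * s ^ ε := by
  rcases le_total s 1 with h | h
  · rcases eq_or_lt_of_le hs with h0 | h0
    · rw [← h0, Real.zero_rpow hε.ne']
      norm_num
    · have h2 : s ≤ s ^ ε := by
        calc s = s ^ (1:ℝ) := (Real.rpow_one s).symm
          _ ≤ s ^ ε := Real.rpow_le_rpow_of_exponent_ge h0 h hε1
      have hsε : 0 ≤ s ^ ε := Real.rpow_nonneg hs ε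
      calc min s 2 ≤ s := min_le_left _ _
        _ ≤ s ^ ε := h2
        _ ≤ 2 * s ^ ε := by linarith
  · have h2 : 1 ≤ s ^ ε := by
      calc (1:ℝ) = s ^ (0:ℝ) := (Real.rpow_zero s).symm
        _ ≤ s ^ ε := Real.rpow_le_rpow_of_exponent_le h hε.le
    calc min s 2 ≤ 2 := min_le_right _ _
      _ ≤ 2 * s ^ ε := by linarith

private lemma abs_log_sub_log_le' {a b : ℝ} (ha : 0 < a) (hb : 0 < b) :
    |Real.log a - Real.log b| ≤ |a - b| / min a b := by
  have key : ∀ x y : ℝ, 0 < x → 0 < y → y ≤ x → Real.log x - Real.log y ≤ (x - y) / y := by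
    intro x y hx hy hxy
    rw [← Real.log_div hx.ne' hy.ne']
    have h1 := Real.log_le_sub_one_of_pos (div_pos hx hy)
    have h2 : x / y - 1 = (x - y) / y := by field_simp
    linarith
  rcases le_total b a with hab | hab
  · have hlog : Real.log b ≤ Real.log a := Real.log_le_log hb hab
    rw [abs_of_nonneg (by linarith), abs_of_nonneg (by linarith), min_eq_right hab]
    exact key a b ha hb hab
  · have hlog : Real.log a ≤ Real.log b := Real.log_le_log ha hab
    rw [abs_sub_comm, abs_sub_comm a b, abs_of_nonneg (by linarith),
      abs_of_nonneg (by linarith), min_eq_left hab]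
    exact key b a hb ha hab

variable {d : ℕ}

private lemma Gd_inv_apply (g : Gd d) (v : E d) :
    ((g⁻¹ : Gd d) : E d →L[ℝ] E d) ((g : E d →L[ℝ] E d) v) = v := by
  have h : ((g⁻¹ : Gd d) : E d →L[ℝ] E d) * (g : E d →L[ℝ] E d) = 1 := g.inv_mul
  calc ((g⁻¹ : Gd d) : E d →L[ℝ] E d) ((g : E d →L[ℝ] E d) v)
      = (((g⁻¹ : Gd d) : E d →L[ℝ] E d) * (g : E d →L[ℝ] E d)) v := rfl
    _ = v := by rw [h]; rfl

private lemma norm_le_inv_mul (g : Gd d) (v : E d) :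
    ‖v‖ ≤ ‖((g⁻¹ : Gd d) : E d →L[ℝ] E d)‖ * ‖(g : E d →L[ℝ] E d) v‖ := by
  conv_lhs => rw [← Gd_inv_apply g v]
  exact ContinuousLinearMap.le_opNorm _ _

private lemma norm_apply_pos (g : Gd d) {v : E d} (hv : v ≠ 0) :
    0 < ‖(g : E d →L[ℝ] E d) v‖ := by
  rw [norm_pos_iff]
  intro h0
  apply hv
  rw [← Gd_inv_apply g v, h0, map_zero]

private lemma one_le_Nnorm [Nontrivial (E d)] (g : Gd d) : 1 ≤ Nnorm g := by
  have h1 : (1 : E d →L[ℝ] E d) = (g : E d →L[ℝ] E d) * ((g⁻¹ : Gd d) : E d →L[ℝ] E d) := by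
    exact g.mul_inv.symm
  have h2 : (1:ℝ) ≤ ‖(g : E d →L[ℝ] E d)‖ * ‖((g⁻¹ : Gd d) : E d →L[ℝ] E d)‖ := by
    calc (1:ℝ) = ‖(1 : E d →L[ℝ] E d)‖ := by
          rw [ContinuousLinearMap.one_def, ContinuousLinearMap.norm_id]
      _ ≤ _ := by rw [h1]; exact norm_mul_le _ _
  have h3 := le_max_left ‖(g : E d →L[ℝ] E d)‖ ‖((g⁻¹ : Gd d) : E d →L[ℝ] E d)‖
  have h4 := le_max_right ‖(g : E d →L[ℝ] E d)‖ ‖((g⁻¹ : Gd d) : E d →L[ℝ] E d)‖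
  have h5 : 0 ≤ ‖(g : E d →L[ℝ] E d)‖ := norm_nonneg _
  have h6 : 0 ≤ ‖((g⁻¹ : Gd d) : E d →L[ℝ] E d)‖ := norm_nonneg _
  unfold Nnorm
  nlinarith

private lemma abs_rho_sub_le (g g' : Gd d) (x : ℙ ℝ (E d)) :
    |ρ g x - ρ g' x|
      ≤ ‖(g : E d →L[ℝ] E d) - (g' : E d →L[ℝ] E d)‖ * (Nnorm g * Nnorm g') := by
  haveI : Nontrivial (E d) := ⟨⟨x.rep, 0, x.rep_nonzero⟩⟩
  set r := x.rep with hrdef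
  have hr : r ≠ 0 := x.rep_nonzero
  have hrpos : 0 < ‖r‖ := norm_pos_iff.2 hr
  have ha : 0 < ‖(g : E d →L[ℝ] E d) r‖ := norm_apply_pos g hr
  have hb : 0 < ‖(g' : E d →L[ℝ] E d) r‖ := norm_apply_pos g' hr
  have hN : 1 ≤ Nnorm g := one_le_Nnorm g
  have hN' : 1 ≤ Nnorm g' := one_le_Nnorm g'
  set P := Nnorm g * Nnorm g' with hPdef
  have hP1 : 1 ≤ P := one_le_mul_of_one_le_of_one_le hN hN'
  have hP0 : 0 < P := lt_of_lt_of_le one_pos hP1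
  have hρ : ρ g x - ρ g' x
      = Real.log ‖(g : E d →L[ℝ] E d) r‖ - Real.log ‖(g' : E d →L[ℝ] E d) r‖ := by
    rw [ρ, ρ, ← hrdef, Real.log_div ha.ne' hrpos.ne', Real.log_div hb.ne' hrpos.ne']
    ring
  rw [hρ]
  have hnum : |‖(g : E d →L[ℝ] E d) r‖ - ‖(g' : E d →L[ℝ] E d) r‖|
      ≤ ‖(g : E d →L[ℝ] E d) - (g' : E d →L[ℝ] E d)‖ * ‖r‖ := by
    calc |‖(g : E d →L[ℝ] E d) r‖ - ‖(g' : E d →L[ℝ] E d) r‖|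
        ≤ ‖(g : E d →L[ℝ] E d) r - (g' : E d →L[ℝ] E d) r‖ := abs_norm_sub_norm_le _ _
      _ = ‖((g : E d →L[ℝ] E d) - (g' : E d →L[ℝ] E d)) r‖ := by
          rw [ContinuousLinearMap.sub_apply]
      _ ≤ _ := ContinuousLinearMap.le_opNorm _ _
  have hden : ‖r‖ / P ≤ min ‖(g : E d →L[ℝ] E d) r‖ ‖(g' : E d →L[ℝ] E d) r‖ := by
    have key : ∀ u : Gd d, Nnorm u ≤ P →
        ‖r‖ / P ≤ ‖(u : E d →L[ℝ] E d) r‖ := by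
      intro u hu
      rw [div_le_iff₀ hP0]
      have h1 : ‖((u⁻¹ : Gd d) : E d →L[ℝ] E d)‖ ≤ Nnorm u := le_max_right _ _
      have h2 := norm_le_inv_mul u r
      have h3 : 0 ≤ ‖(u : E d →L[ℝ] E d) r‖ := norm_nonneg _
      nlinarith
    refine le_min (key g ?_) (key g' ?_)
    · exact le_mul_of_one_le_right (by linarith) hN'
    · exact le_mul_of_one_le_left (by linarith) hN
  calc |Real.log ‖(g : E d →L[ℝ] E d) r‖ - Real.log ‖(g' : E d →L[ℝ] E d) r‖|
      ≤ |‖(g : E d →L[ℝ] E d) r‖ - ‖(g' : E d →L[ℝ] E d) r‖|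
          / min ‖(g : E d →L[ℝ] E d) r‖ ‖(g' : E d →L[ℝ] E d) r‖ := abs_log_sub_log_le' ha hb
    _ ≤ (‖(g : E d →L[ℝ] E d) - (g' : E d →L[ℝ] E d)‖ * ‖r‖) / (‖r‖ / P) := by
        gcongr
    _ = ‖(g : E d →L[ℝ] E d) - (g' : E d →L[ℝ] E d)‖ * P := by
        field_simp

end AuxLemmas

/-- With parameters `ε = δ₀/8`, `θ = 3ε`, `β = 7ε` (as in the paper we may assume
`δ₀ ≤ 8/3` without loss of generality), if `h` is continuous with `|h|_θ < ∞` and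
`k'_{ε,β}(h) < ∞`, then for every `t ∈ ℝ`,
`k'_{ε,β}(e^{itρ} h) ≤ 2|t|^ε |h|_θ + k'_{ε,β}(h)`. -/
theorem kG_exp_smul_le
    {d : ℕ} (δ₀ ε θ β : ℝ) (hδ₀ : 0 < δ₀) (hδ₀' : δ₀ ≤ 8 / 3)
    (hε : ε = δ₀ / 8) (hθ : θ = 3 * ε) (hβ : β = 7 * ε)
    (h : Gd d → ℙ ℝ (E d) → ℂ)
    (hcont : Continuous fun p : Gd d × ℙ ℝ (E d) => h p.1 p.2)
    (hθfin : nθ θ h ≠ ⊤) (hkfin : kG ε β h ≠ ⊤) (t : ℝ) :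
    kG ε β (fun g x => Complex.exp (Complex.I * (t * ρ g x)) * h g x)
      ≤ ENNReal.ofReal (2 * |t| ^ ε) * nθ θ h + kG ε β h := by
  have hε0 : 0 < ε := by rw [hε]; linarith
  have hε1 : ε ≤ 1 := by rw [hε]; linarith
  rw [kG]
  refine iSup_le fun g => iSup_le fun g' => iSup_le fun hne => iSup_le fun x => ?_
  haveI : Nontrivial (E d) := ⟨⟨x.rep, 0, x.rep_nonzero⟩⟩
  have hN : 1 ≤ Nnorm g := one_le_Nnorm g
  have hN' : 1 ≤ Nnorm g' := one_le_Nnorm g'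
  have hN0 : 0 < Nnorm g := lt_of_lt_of_le one_pos hN
  have hN0' : 0 < Nnorm g' := lt_of_lt_of_le one_pos hN'
  have hGG' : (g : E d →L[ℝ] E d) ≠ (g' : E d →L[ℝ] E d) := fun hh => hne (Units.ext hh)
  have hΔ : 0 < ‖(g : E d →L[ℝ] E d) - (g' : E d →L[ℝ] E d)‖ :=
    norm_pos_iff.2 (sub_ne_zero.2 hGG')
  set Δ := ‖(g : E d →L[ℝ] E d) - (g' : E d →L[ℝ] E d)‖ with hΔdef
  set D := Δ ^ ε * Nnorm g ^ β * Nnorm g' ^ β with hDdef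
  have hDpos : 0 < D := by
    rw [hDdef]
    positivity
  set A := ‖Complex.exp (Complex.I * (t * ρ g x)) * h g x
      - Complex.exp (Complex.I * (t * ρ g' x)) * h g' x‖ with hAdef
  set Δh := ‖h g x - h g' x‖ with hΔhdef
  set R1 := 2 * |t| ^ ε * (‖h g x‖ / Nnorm g ^ θ) with hR1def
  -- Step 1: decompose
  have s1 : A ≤ ‖Complex.exp (Complex.I * (t * ρ g x))
      - Complex.exp (Complex.I * (t * ρ g' x))‖ * ‖h g x‖ + Δh := by
    have decomp : Complex.exp (Complex.I * (t * ρ g x)) * h g x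
        - Complex.exp (Complex.I * (t * ρ g' x)) * h g' x
        = (Complex.exp (Complex.I * (t * ρ g x)) - Complex.exp (Complex.I * (t * ρ g' x)))
            * h g x + Complex.exp (Complex.I * (t * ρ g' x)) * (h g x - h g' x) := by
      ring
    have habs1 : ‖Complex.exp (Complex.I * ((t : ℂ) * (ρ g' x : ℂ)))‖ = 1 := by
      rw [show Complex.I * ((t : ℂ) * (ρ g' x : ℂ)) = ((t * ρ g' x : ℝ) : ℂ) * Complex.I by
        push_cast; ring]
      exact Complex.norm_exp_ofReal_mul_I _
    calc A = ‖(Complex.exp (Complex.I * (t * ρ g x))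
          - Complex.exp (Complex.I * (t * ρ g' x))) * h g x
          + Complex.exp (Complex.I * (t * ρ g' x)) * (h g x - h g' x)‖ := by
          rw [hAdef, decomp]
      _ ≤ ‖(Complex.exp (Complex.I * (t * ρ g x))
          - Complex.exp (Complex.I * (t * ρ g' x))) * h g x‖
          + ‖Complex.exp (Complex.I * (t * ρ g' x)) * (h g x - h g' x)‖ :=
          norm_add_le _ _
      _ = ‖Complex.exp (Complex.I * (t * ρ g x))
          - Complex.exp (Complex.I * (t * ρ g' x))‖ * ‖h g x‖ + 1 * Δh := by
          rw [norm_mul, norm_mul, habs1, hΔhdef]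
      _ = _ := by ring
  -- Step 2: oscillation bound
  have s2 : ‖Complex.exp (Complex.I * (t * ρ g x))
      - Complex.exp (Complex.I * (t * ρ g' x))‖
      ≤ 2 * |t| ^ ε * (Δ ^ ε * (Nnorm g ^ ε * Nnorm g' ^ ε)) := by
    have e1 : Complex.I * ((t : ℂ) * (ρ g x : ℂ)) = Complex.I * ((t * ρ g x : ℝ) : ℂ) := by
      push_cast; ring
    have e2 : Complex.I * ((t : ℂ) * (ρ g' x : ℂ)) = Complex.I * ((t * ρ g' x : ℝ) : ℂ) := by
      push_cast; ring
    rw [e1, e2]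
    have b1 := abs_exp_I_mul_sub' (t * ρ g x) (t * ρ g' x)
    have b2 : |t * ρ g x - t * ρ g' x| ≤ |t| * (Δ * (Nnorm g * Nnorm g')) := by
      rw [show t * ρ g x - t * ρ g' x = t * (ρ g x - ρ g' x) by ring, abs_mul]
      have := abs_rho_sub_le g g' x
      have h0 : 0 ≤ |t| := abs_nonneg t
      nlinarith [abs_nonneg (ρ g x - ρ g' x)]
    have b3 : min |t * ρ g x - t * ρ g' x| 2
        ≤ 2 * (|t| * (Δ * (Nnorm g * Nnorm g'))) ^ ε := by
      calc min |t * ρ g x - t * ρ g' x| 2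
          ≤ min (|t| * (Δ * (Nnorm g * Nnorm g'))) 2 := by
            exact min_le_min (by exact b2) le_rfl
        _ ≤ 2 * (|t| * (Δ * (Nnorm g * Nnorm g'))) ^ ε :=
            min_le_two_rpow (by positivity) hε0 hε1
    have b4 : (|t| * (Δ * (Nnorm g * Nnorm g'))) ^ ε
        = |t| ^ ε * (Δ ^ ε * (Nnorm g ^ ε * Nnorm g' ^ ε)) := by
      rw [Real.mul_rpow (abs_nonneg t) (by positivity),
        Real.mul_rpow hΔ.le (by positivity),
        Real.mul_rpow hN0.le hN0'.le]
    calc ‖_‖ ≤ min |t * ρ g x - t * ρ g' x| 2 := b1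
      _ ≤ 2 * (|t| * (Δ * (Nnorm g * Nnorm g'))) ^ ε := b3
      _ = 2 * |t| ^ ε * (Δ ^ ε * (Nnorm g ^ ε * Nnorm g' ^ ε)) := by rw [b4]; ring
  -- Step 3: exponent bookkeeping
  have s3 : 2 * |t| ^ ε * (Δ ^ ε * (Nnorm g ^ ε * Nnorm g' ^ ε)) * ‖h g x‖
      ≤ R1 * D := by
    have hNθ : 0 < Nnorm g ^ θ := Real.rpow_pos_of_pos hN0 θ
    have hhx : ‖h g x‖ = ‖h g x‖ / Nnorm g ^ θ * Nnorm g ^ θ :=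
      (div_mul_cancel₀ _ hNθ.ne').symm
    have key : Nnorm g ^ θ * Nnorm g ^ ε * Nnorm g' ^ ε ≤ Nnorm g ^ β * Nnorm g' ^ β := by
      have e1 : Nnorm g ^ θ * Nnorm g ^ ε = Nnorm g ^ (θ + ε) := (Real.rpow_add hN0 _ _).symm
      have e2 : Nnorm g ^ (θ + ε) ≤ Nnorm g ^ β :=
        Real.rpow_le_rpow_of_exponent_le hN (by rw [hθ, hβ]; linarith)
      have e3 : Nnorm g' ^ ε ≤ Nnorm g' ^ β :=
        Real.rpow_le_rpow_of_exponent_le hN' (by rw [hβ]; linarith)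
      have p1 : 0 < Nnorm g ^ (θ + ε) := Real.rpow_pos_of_pos hN0 _
      have p2 : 0 < Nnorm g' ^ ε := Real.rpow_pos_of_pos hN0' _
      rw [e1]
      nlinarith
    have hq : 0 ≤ ‖h g x‖ / Nnorm g ^ θ := by positivity
    calc 2 * |t| ^ ε * (Δ ^ ε * (Nnorm g ^ ε * Nnorm g' ^ ε)) * ‖h g x‖
        = 2 * |t| ^ ε * Δ ^ ε * (‖h g x‖ / Nnorm g ^ θ
            * (Nnorm g ^ θ * Nnorm g ^ ε * Nnorm g' ^ ε)) := by
          conv_lhs => rw [hhx]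
          ring
      _ ≤ 2 * |t| ^ ε * Δ ^ ε * (‖h g x‖ / Nnorm g ^ θ
            * (Nnorm g ^ β * Nnorm g' ^ β)) := by
          have h2 : 0 ≤ 2 * |t| ^ ε * Δ ^ ε := by positivity
          exact mul_le_mul_of_nonneg_left (mul_le_mul_of_nonneg_left key hq) h2
      _ = R1 * D := by rw [hR1def, hDdef]; ring
  -- Combine: key real inequality
  have key : A ≤ R1 * D + Δh := by
    have hhx0 : 0 ≤ ‖h g x‖ := norm_nonneg _
    calc A ≤ ‖Complex.exp (Complex.I * (t * ρ g x))
          - Complex.exp (Complex.I * (t * ρ g' x))‖ * ‖h g x‖ + Δh := s1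
      _ ≤ 2 * |t| ^ ε * (Δ ^ ε * (Nnorm g ^ ε * Nnorm g' ^ ε)) * ‖h g x‖ + Δh :=
          add_le_add_left (mul_le_mul_of_nonneg_right s2 hhx0) _
      _ ≤ R1 * D + Δh := add_le_add_left s3 _
  have hdiv : A / D ≤ R1 + Δh / D := by
    have heq : (R1 + Δh / D) * D = R1 * D + Δh := by field_simp
    rw [div_le_iff₀ hDpos, heq]
    exact key
  -- ENNReal bookkeeping
  calc ENNReal.ofReal (A / D)
      ≤ ENNReal.ofReal (R1 + Δh / D) := ENNReal.ofReal_le_ofReal hdiv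
    _ ≤ ENNReal.ofReal R1 + ENNReal.ofReal (Δh / D) := ENNReal.ofReal_add_le
    _ ≤ ENNReal.ofReal (2 * |t| ^ ε) * nθ θ h + kG ε β h := by
        refine add_le_add ?_ ?_
        · rw [hR1def, ENNReal.ofReal_mul (by positivity)]
          refine mul_le_mul_right ?_ _
          rw [nθ]
          exact le_trans
            (le_iSup (fun x => ENNReal.ofReal (‖h g x‖ / Nnorm g ^ θ)) x)
            (le_iSup (fun g => ⨆ x, ENNReal.ofReal (‖h g x‖ / Nnorm g ^ θ)) g)
        · rw [kG, hΔhdef, hDdef, hΔdef]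
          refine le_trans (le_iSup (fun x => ENNReal.ofReal
              (‖h g x - h g' x‖ /
                (‖(g : E d →L[ℝ] E d) - (g' : E d →L[ℝ] E d)‖ ^ ε
                  * Nnorm g ^ β * Nnorm g' ^ β))) x) ?_
          refine le_trans (le_iSup (fun _ : g ≠ g' => ⨆ x, ENNReal.ofReal
              (‖h g x - h g' x‖ /
                (‖(g : E d →L[ℝ] E d) - (g' : E d →L[ℝ] E d)‖ ^ ε
                  * Nnorm g ^ β * Nnorm g' ^ β))) hne) ?_
          refine le_trans (le_iSup (fun g' => ⨆ (_ : g ≠ g') (x), ENNReal.ofReal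
              (‖h g x - h g' x‖ /
                (‖(g : E d →L[ℝ] E d) - (g' : E d →L[ℝ] E d)‖ ^ ε
                  * Nnorm g ^ β * Nnorm g' ^ β))) g') ?_
          exact le_iSup (fun g => ⨆ (g' : Gd d) (_ : g ≠ g') (x), ENNReal.ofReal
              (‖h g x - h g' x‖ /
                (‖(g : E d →L[ℝ] E d) - (g' : E d →L[ℝ] E d)‖ ^ ε
                  * Nnorm g ^ β * Nnorm g' ^ β))) g
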